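/- The number of S_n-orbits on the set {(s, x) ∈ S_n × Xⁿ : s·x = x} (where S_n acts on Xⁿ by permuting coordinates and on itself by conjugation) has generating series Σ_{n≥0} (#orbits)·tⁿ = ∏_{r≥1} (1−t^r)^{−|X|}, for any finite set X. -/

import Mathlib

attribute [local instance] arrowAction

/-- `G` acts on the set of pairs `(g, x)` with `g • x = x` by
`h • (g, x) = (h g h⁻¹, h • x)`. -/
instance fixedPairsAction (G X : Type) [Group G] [MulAction G X] :
    MulAction G {p : G × X // p.1 • p.2 = p.2} where
  smul h p := ⟨(h * p.1.1 * h⁻¹, h • p.1.2), by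
    have hp := p.2
    show (h * p.1.1 * h⁻¹) • (h • p.1.2) = h • p.1.2
    rw [← mul_smul, inv_mul_cancel_right, mul_smul, hp]⟩
  one_smul p := Subtype.ext (Prod.ext
    (show 1 * p.1.1 * 1⁻¹ = p.1.1 by simp) (one_smul G p.1.2))
  mul_smul a b p := Subtype.ext (Prod.ext
    (show (a * b) * p.1.1 * (a * b)⁻¹ = a * (b * p.1.1 * b⁻¹) * a⁻¹ by
      simp [mul_assoc]) (mul_smul a b p.1.2))

open Finset MulAction Function

namespace PFP

/-- The pairs `(s, x)` with `s • x = x`. -/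
abbrev Pairs (n : ℕ) (X : Type) : Type :=
  {p : Equiv.Perm (Fin n) × (Fin n → X) // p.1 • p.2 = p.2}

lemma arrow_smul_apply {G A B : Type*} [Group G] [MulAction G A] (g : G) (F : A → B) (a : A) :
    (g • F) a = F (g⁻¹ • a) := rfl

/-- cycle length of `i` under `s`. -/
noncomputable def per {n : ℕ} (s : Equiv.Perm (Fin n)) (i : Fin n) : ℕ := Function.minimalPeriod s i

variable {n : ℕ} {X : Type} [Fintype X] [DecidableEq X]

/-- A decomposition of `(s, x)` into labelled cycles. -/
structure Model (s : Equiv.Perm (Fin n)) (x : Fin n → X) where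
  ι : Type
  fint : Fintype ι
  len : ι → ℕ
  lab : ι → X
  E : Fin n ≃ Σ i : ι, ZMod (len i)
  pos : ∀ i, 0 < len i
  step : ∀ (i : ι) (k : ZMod (len i)), E.symm ⟨i, k + 1⟩ = s (E.symm ⟨i, k⟩)
  label : ∀ (i : ι) (k : ZMod (len i)), x (E.symm ⟨i, k⟩) = lab i

attribute [instance] Model.fint

instance {n : ℕ} {X : Type} {s : Equiv.Perm (Fin n)} {x : Fin n → X} (M : Model s x)
    (i : M.ι) : NeZero (M.len i) := ⟨(M.pos i).ne'⟩

namespace Model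

variable {s : Equiv.Perm (Fin n)} {x : Fin n → X} (M : Model s x)

lemma iterate (t : ℕ) (i : M.ι) (k : ZMod (M.len i)) :
    (⇑s)^[t] (M.E.symm ⟨i, k⟩) = M.E.symm ⟨i, k + t⟩ := by
  induction t generalizing k with
  | zero => simp
  | succ t ih =>
      rw [Function.iterate_succ_apply', ih, ← M.step i (k + t)]
      have : ((t + 1 : ℕ) : ZMod (M.len i)) = (t : ZMod (M.len i)) + 1 := by push_cast; ring
      rw [this, ← add_assoc]

lemma per_eq (i : M.ι) (k : ZMod (M.len i)) :
    per s (M.E.symm ⟨i, k⟩) = M.len i := by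
  have hper : Function.IsPeriodicPt ⇑s (M.len i) (M.E.symm ⟨i, k⟩) := by
    show (⇑s)^[M.len i] _ = _
    rw [M.iterate, ZMod.natCast_self, add_zero]
  have h1 : per s (M.E.symm ⟨i, k⟩) ∣ M.len i := hper.minimalPeriod_dvd
  have h2 : M.len i ∣ per s (M.E.symm ⟨i, k⟩) := by
    have hmp := Function.isPeriodicPt_minimalPeriod ⇑s (M.E.symm ⟨i, k⟩)
    have h3 : M.E.symm ⟨i, k + (per s (M.E.symm ⟨i, k⟩) : ZMod (M.len i))⟩
        = M.E.symm ⟨i, k⟩ := by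
      rw [← M.iterate]; exact hmp
    have h4 := M.E.symm.injective h3
    have h5 : k + (per s (M.E.symm ⟨i, k⟩) : ZMod (M.len i)) = k := by
      have := (Sigma.mk.inj_iff.mp h4).2
      exact eq_of_heq this
    have h6 : ((per s (M.E.symm ⟨i, k⟩) : ℕ) : ZMod (M.len i)) = 0 :=
      (add_eq_left).mp h5
    exact (ZMod.natCast_eq_zero_iff _ _).mp h6
  exact Nat.dvd_antisymm h1 h2

lemma per_apply (j : Fin n) : per s j = M.len (M.E j).1 := by
  have := M.per_eq (M.E j).1 (M.E j).2
  rwa [Sigma.eta, Equiv.symm_apply_apply] at this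

lemma label_apply (j : Fin n) : x j = M.lab (M.E j).1 := by
  have := M.label (M.E j).1 (M.E j).2
  rwa [Sigma.eta, Equiv.symm_apply_apply] at this

lemma len_le (i : M.ι) : M.len i ≤ n := by
  calc M.len i = Fintype.card (ZMod (M.len i)) := (ZMod.card _).symm
    _ ≤ Fintype.card (Σ i : M.ι, ZMod (M.len i)) := by
        rw [Fintype.card_sigma]
        exact Finset.single_le_sum (f := fun i => Fintype.card (ZMod (M.len i)))
          (fun _ _ => Nat.zero_le _) (mem_univ i)
    _ = Fintype.card (Fin n) := Fintype.card_congr M.E.symm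
    _ = n := Fintype.card_fin n

end Model

/-- subtype of a sigma type by a predicate on the base. -/
def sigmaSubtype {ι : Type*} {β : ι → Type*} (Q : ι → Prop) :
    {σ : Σ i, β i // Q σ.1} ≃ Σ i : Subtype Q, β i.1 where
  toFun σ := ⟨⟨σ.1.1, σ.2⟩, σ.1.2⟩
  invFun τ := ⟨⟨τ.1.1, τ.2⟩, τ.1.2⟩
  left_inv := fun ⟨⟨i, k⟩, h⟩ => rfl
  right_inv := fun ⟨⟨i, h⟩, k⟩ => rfl

lemma Model.card_fiber {s : Equiv.Perm (Fin n)} {x : Fin n → X} (M : Model s x)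
    (r : ℕ) (y : X) :
    Nat.card {j : Fin n // (per s j, x j) = (r, y)} =
      r * Nat.card {i : M.ι // (M.len i, M.lab i) = (r, y)} := by
  classical
  have e1 : {j : Fin n // (per s j, x j) = (r, y)} ≃
      {σ : Σ i : M.ι, ZMod (M.len i) // (M.len σ.1, M.lab σ.1) = (r, y)} :=
    M.E.subtypeEquiv (fun j => by rw [M.per_apply, M.label_apply])
  have e2 := sigmaSubtype (ι := M.ι) (β := fun i => ZMod (M.len i))
    (fun i => (M.len i, M.lab i) = (r, y))
  rw [Nat.card_congr (e1.trans e2)]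
  rw [Nat.card_eq_fintype_card, Fintype.card_sigma]
  rw [Nat.card_eq_fintype_card, Fintype.card_eq_sum_ones, Finset.mul_sum]
  refine Finset.sum_congr rfl (fun i _ => ?_)
  rw [ZMod.card, mul_one]
  exact (congrArg Prod.fst i.2)

/-- transport a model along conjugation. -/
def Model.conj {s : Equiv.Perm (Fin n)} {x : Fin n → X} (M : Model s x)
    (h : Equiv.Perm (Fin n)) :
    Model (h * s * h⁻¹) (fun j => x (h⁻¹ j)) where
  ι := M.ι
  fint := M.fint
  len := M.len
  lab := M.lab
  E := (h.symm : Fin n ≃ Fin n).trans M.E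
  pos := M.pos
  step i k := by
    show h (M.E.symm ⟨i, k + 1⟩) = (h * s * h⁻¹) (h (M.E.symm ⟨i, k⟩))
    simp [Equiv.Perm.mul_apply, M.step i k]
  label i k := by
    show x (h⁻¹ (h (M.E.symm ⟨i, k⟩))) = M.lab i
    simp [M.label i k]

section mkModel

variable (s : Equiv.Perm (Fin n))

/-- every point is a periodic point of a permutation of a finite type -/
lemma mem_periodicPts (j : Fin n) : j ∈ periodicPts ⇑s := by
  refine ⟨orderOf s, orderOf_pos s, ?_⟩
  show (⇑s)^[orderOf s] j = j
  have h1 : (⇑s)^[orderOf s] = ⇑(s ^ orderOf s) := (Equiv.Perm.iterate_eq_pow s (orderOf s)).symm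
  rw [h1, pow_orderOf_eq_one]
  rfl

/-- the standard generator of `zpowers s`. -/
noncomputable abbrev aGen : Subgroup.zpowers s := ⟨s, Subgroup.mem_zpowers s⟩

lemma aGen_smul_eq : (fun j : Fin n => (aGen s) • j) = ⇑s := rfl

lemma aGen_smul_eq_iff {j : Fin n} {t : ℤ} :
    (aGen s) ^ t • j = j ↔ ((minimalPeriod ⇑s j : ℤ)) ∣ t := by
  have := MulAction.zpow_smul_eq_iff_minimalPeriod_dvd (a := aGen s) (b := j) (n := t)
  rwa [aGen_smul_eq] at this

lemma aGen_smul_mod (j : Fin n) (t : ℤ) :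
    (aGen s) ^ (t % (minimalPeriod ⇑s j : ℤ)) • j = (aGen s) ^ t • j := by
  have := MulAction.zpow_smul_mod_minimalPeriod (a := aGen s) (b := j) t
  rwa [aGen_smul_eq] at this

lemma aGen_smul_congr (j : Fin n) (t u : ℤ)
    (h : (t : ZMod (minimalPeriod ⇑s j)) = (u : ZMod (minimalPeriod ⇑s j))) :
    (aGen s) ^ t • j = (aGen s) ^ u • j := by
  rw [ZMod.intCast_eq_intCast_iff'] at h
  rw [← aGen_smul_mod s j t, ← aGen_smul_mod s j u, h]

/-- existence of a model for any invariant pair. -/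
noncomputable def mkModel (x : Fin n → X)
    (hx : ∀ j, x (s j) = x j) : Model s x := by
  classical
  letI : Fintype (orbitRel.Quotient (Subgroup.zpowers s) (Fin n)) := Fintype.ofFinite _
  set Ω := orbitRel.Quotient (Subgroup.zpowers s) (Fin n) with hΩ
  set m : Ω → ℕ := fun o => minimalPeriod ⇑s o.out with hm
  set F : (Σ o : Ω, ZMod (m o)) → Fin n := fun σ => (aGen s) ^ ((σ.2.cast : ℤ)) • σ.1.out
    with hF
  have hmem : ∀ (o : Ω) (t : ℤ), (aGen s) ^ t • o.out ∈ MulAction.orbit (Subgroup.zpowers s) o.out :=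
    fun o t => MulAction.mem_orbit _ _
  have hmk : ∀ (o : Ω) (t : ℤ), (Quotient.mk'' ((aGen s) ^ t • o.out) : Ω) = o := by
    intro o t
    have h1 : (Quotient.mk'' ((aGen s) ^ t • o.out) : Ω) = Quotient.mk'' o.out :=
      Quotient.sound' ((MulAction.orbitRel_apply).mpr (hmem o t))
    rw [h1, Quotient.mk''_eq_mk, Quotient.out_eq]
  have hpos : ∀ o : Ω, 0 < m o := fun o =>
    minimalPeriod_pos_of_mem_periodicPts (mem_periodicPts s o.out)
  haveI : ∀ o : Ω, NeZero (m o) := fun o => ⟨(hpos o).ne'⟩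
  have hinj : Function.Injective F := by
    rintro ⟨o, k⟩ ⟨o', k'⟩ hEq
    have ho : o = o' := by
      have h1 := hmk o (k.cast : ℤ)
      have h2 := hmk o' (k'.cast : ℤ)
      rw [show F ⟨o, k⟩ = (aGen s) ^ ((k.cast : ℤ)) • o.out from rfl] at hEq
      rw [hEq] at h1
      rw [← h1, h2]
    subst ho
    have h3 : ((aGen s) ^ ((k'.cast : ℤ)))⁻¹ * (aGen s) ^ ((k.cast : ℤ)) =
        (aGen s) ^ ((k.cast : ℤ) - (k'.cast : ℤ)) := by
      rw [sub_eq_neg_add, zpow_add, zpow_neg]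
    have h4 : (aGen s) ^ ((k.cast : ℤ) - (k'.cast : ℤ)) • o.out = o.out := by
      rw [← h3, mul_smul]
      have h5 : (aGen s) ^ ((k.cast : ℤ)) • o.out = (aGen s) ^ ((k'.cast : ℤ)) • o.out := hEq
      rw [h5, inv_smul_smul]
    have h6 : ((minimalPeriod ⇑s o.out : ℤ)) ∣ ((k.cast : ℤ) - (k'.cast : ℤ)) :=
      (aGen_smul_eq_iff s).mp h4
    have h7 : (((k.cast : ℤ) - (k'.cast : ℤ) : ℤ) : ZMod (m o)) = 0 :=
      (ZMod.intCast_zmod_eq_zero_iff_dvd _ _).mpr h6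
    have h8 : k = k' := by
      push_cast at h7
      exact sub_eq_zero.mp h7
    subst h8
    rfl
  have hsurj : Function.Surjective F := by
    intro j
    set o : Ω := Quotient.mk'' j with ho
    have h1 : j ∈ MulAction.orbit (Subgroup.zpowers s) o.out := by
      have := orbitRel.Quotient.mem_orbit (G := Subgroup.zpowers s) (x := o) (a := j)
      rw [orbitRel.Quotient.orbit_eq_orbit_out o Quotient.out_eq'] at this
      exact this.mpr (by rw [ho, Quotient.mk''_eq_mk])
    obtain ⟨g, hg⟩ := h1
    obtain ⟨t, ht⟩ := Subgroup.mem_zpowers_iff.mp g.2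
    have hg' : (aGen s) ^ t = g := Subtype.ext (by
      push_cast
      exact ht)
    refine ⟨⟨o, ((t : ZMod (m o)))⟩, ?_⟩
    show (aGen s) ^ (((t : ZMod (m o)).cast : ℤ)) • o.out = j
    rw [aGen_smul_congr s o.out _ t (by rw [ZMod.intCast_zmod_cast])]
    rw [hg', ← hg]
  refine
  { ι := Ω
    fint := inferInstance
    len := m
    lab := fun o => x o.out
    E := (Equiv.ofBijective F ⟨hinj, hsurj⟩).symm
    pos := hpos
    step := ?_
    label := ?_ }
  · intro o k
    show F ⟨o, k + 1⟩ = s (F ⟨o, k⟩)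
    have h1 : s (F ⟨o, k⟩) = (aGen s) ^ ((1 : ℤ) + (k.cast : ℤ)) • o.out := by
      rw [zpow_add, zpow_one, mul_smul]
      rfl
    rw [h1]
    refine aGen_smul_congr s o.out _ _ ?_
    push_cast
    ring
  · intro o k
    show x ((aGen s) ^ ((k.cast : ℤ)) • o.out) = x o.out
    have hpow : ∀ (t : ℤ) (j : Fin n), x ((s ^ t) j) = x j := by
      intro t
      induction t using Int.induction_on with
      | zero => intro j; simp
      | succ t ih =>
          intro j
          have : (s ^ ((t : ℤ) + 1)) j = (s ^ (t : ℤ)) (s j) := by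
            rw [zpow_add_one, Equiv.Perm.mul_apply]
          rw [this, ih (s j), hx j]
      | pred t ih =>
          intro j
          have : (s ^ (-(t : ℤ) - 1)) j = (s ^ (-(t : ℤ))) (s⁻¹ j) := by
            rw [zpow_sub_one, Equiv.Perm.mul_apply]
          rw [this, ih (s⁻¹ j)]
          have := hx (s⁻¹ j)
          rw [Equiv.Perm.inv_def, Equiv.apply_symm_apply] at this
          exact this.symm
    have : ((aGen s) ^ ((k.cast : ℤ)) • o.out) = (s ^ ((k.cast : ℤ))) o.out := rfl
    rw [this, hpow]

end mkModel

/-- fiber counting finsupp. -/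
noncomputable def fiberCount (s : Equiv.Perm (Fin n)) (x : Fin n → X) : (ℕ × X) →₀ ℕ :=
  ∑ i : Fin n, Finsupp.single (per s i, x i) 1

lemma fiberCount_apply (s : Equiv.Perm (Fin n)) (x : Fin n → X) (q : ℕ × X) :
    fiberCount s x q = #(univ.filter fun i => (per s i, x i) = q) := by
  classical
  rw [fiberCount, Finset.card_filter]
  rw [Finsupp.finset_sum_apply]
  exact Finset.sum_congr rfl fun i _ => by rw [Finsupp.single_apply]

lemma fiberCount_apply' (s : Equiv.Perm (Fin n)) (x : Fin n → X) (q : ℕ × X) :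
    fiberCount s x q = Nat.card {i : Fin n // (per s i, x i) = q} := by
  classical
  rw [fiberCount_apply, Nat.card_eq_fintype_card, Fintype.card_subtype]

lemma fiberCount_eq {s : Equiv.Perm (Fin n)} {x : Fin n → X} (M : Model s x) (q : ℕ × X) :
    fiberCount s x q = q.1 * Nat.card {i : M.ι // (M.len i, M.lab i) = q} := by
  obtain ⟨r, y⟩ := q
  rw [fiberCount_apply', M.card_fiber]

/-- a fiberwise-count-preserving equiv exists. -/
lemma equiv_of_fiber_counts {ι ι' Z : Type*} [Fintype ι] [Fintype ι'] (f : ι → Z) (g : ι' → Z)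
    (h : ∀ z, Nat.card {i // f i = z} = Nat.card {i // g i = z}) :
    ∃ φ : ι ≃ ι', ∀ i, g (φ i) = f i := by
  classical
  have fib : ∀ z : Z, {i // f i = z} ≃ {i' // g i' = z} := fun z =>
    Fintype.equivOfCardEq (by
      have := h z
      rwa [Nat.card_eq_fintype_card, Nat.card_eq_fintype_card] at this)
  refine ⟨(Equiv.sigmaFiberEquiv f).symm.trans
    ((Equiv.sigmaCongrRight fib).trans (Equiv.sigmaFiberEquiv g)), fun i => ?_⟩
  simp only [Equiv.trans_apply, Equiv.sigmaFiberEquiv, Equiv.sigmaCongrRight_apply,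
    Equiv.coe_fn_symm_mk, Equiv.coe_fn_mk]
  exact (fib (f i) ⟨i, rfl⟩).2

lemma pair_hx (p : Pairs n X) : ∀ j, p.1.2 (p.1.1 j) = p.1.2 j := by
  intro j
  have h := congrFun p.2 (p.1.1 j)
  have h2 : (p.1.1 • p.1.2) (p.1.1 j) = p.1.2 (p.1.1⁻¹ (p.1.1 j)) := rfl
  rw [h2, Equiv.Perm.inv_def, Equiv.symm_apply_apply] at h
  exact h.symm

lemma zmod_cast_add_one : ∀ (a b : ℕ) (h : a = b) (k : ZMod a),
    (Equiv.cast (congrArg ZMod h)) (k + 1) = (Equiv.cast (congrArg ZMod h)) k + 1 := by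
  rintro a b rfl k
  simp

lemma same_orbit_of_fiberCount_eq (p q : Pairs n X)
    (h : fiberCount p.1.1 p.1.2 = fiberCount q.1.1 q.1.2) :
    ∃ g : Equiv.Perm (Fin n), g • p = q := by
  classical
  obtain ⟨⟨sp, xp⟩, hp⟩ := p
  obtain ⟨⟨sq, xq⟩, hq⟩ := q
  have hxp : ∀ j, xp (sp j) = xp j := pair_hx ⟨(sp, xp), hp⟩
  have hxq : ∀ j, xq (sq j) = xq j := pair_hx ⟨(sq, xq), hq⟩
  set Mp := mkModel sp xp hxp with hMp
  set Mq := mkModel sq xq hxq with hMq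
  simp only at h
  -- equal fiber counts for the labelled-length maps
  have hfib : ∀ z : ℕ × X, Nat.card {i : Mp.ι // (Mp.len i, Mp.lab i) = z} =
      Nat.card {i : Mq.ι // (Mq.len i, Mq.lab i) = z} := by
    rintro ⟨r, y⟩
    rcases Nat.eq_zero_or_pos r with hr | hr
    · subst hr
      have h1 : IsEmpty {i : Mp.ι // (Mp.len i, Mp.lab i) = (0, y)} :=
        ⟨fun i => by have := Mp.pos i.1; have h2 := congrArg Prod.fst i.2; simp at h2; omega⟩
      have h2 : IsEmpty {i : Mq.ι // (Mq.len i, Mq.lab i) = (0, y)} :=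
        ⟨fun i => by have := Mq.pos i.1; have h2 := congrArg Prod.fst i.2; simp at h2; omega⟩
      rw [Nat.card_of_isEmpty, Nat.card_of_isEmpty]
    · have h1 := fiberCount_eq Mp (r, y)
      have h2 := fiberCount_eq Mq (r, y)
      have h3 : fiberCount sp xp (r, y) = fiberCount sq xq (r, y) := by rw [h]
      rw [h1, h2] at h3
      exact Nat.eq_of_mul_eq_mul_left hr h3
  obtain ⟨φ, hφ⟩ := equiv_of_fiber_counts (fun i => (Mp.len i, Mp.lab i))
    (fun i => (Mq.len i, Mq.lab i)) hfib
  have hlen : ∀ i, Mq.len (φ i) = Mp.len i := fun i => congrArg Prod.fst (hφ i)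
  have hlab : ∀ i, Mq.lab (φ i) = Mp.lab i := fun i => congrArg Prod.snd (hφ i)
  set zc : ∀ i : Mp.ι, ZMod (Mp.len i) ≃ ZMod (Mq.len (φ i)) :=
    fun i => Equiv.cast (congrArg ZMod (hlen i).symm) with hzc
  set ψ : (Σ i : Mp.ι, ZMod (Mp.len i)) ≃ Σ i : Mq.ι, ZMod (Mq.len i) :=
    Equiv.sigmaCongr φ zc with hψ
  set Φ : Equiv.Perm (Fin n) := (Mp.E.trans (ψ.trans Mq.E.symm) : Fin n ≃ Fin n) with hΦ
  have hψ_apply : ∀ (i : Mp.ι) (k : ZMod (Mp.len i)), ψ ⟨i, k⟩ = ⟨φ i, zc i k⟩ := fun i k => rfl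
  have hΦ_apply : ∀ (i : Mp.ι) (k : ZMod (Mp.len i)),
      Φ (Mp.E.symm ⟨i, k⟩) = Mq.E.symm ⟨φ i, zc i k⟩ := by
    intro i k
    simp [hΦ, hψ_apply]
  have key1 : ∀ j, Φ (sp j) = sq (Φ j) := by
    intro j
    obtain ⟨⟨i, k⟩, rfl⟩ : ∃ σ, Mp.E.symm σ = j := ⟨Mp.E j, Equiv.symm_apply_apply _ _⟩
    rw [← Mp.step i k, hΦ_apply, hΦ_apply, zmod_cast_add_one _ _ (hlen i).symm k, Mq.step]
  have key2 : ∀ j, xq (Φ j) = xp j := by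
    intro j
    obtain ⟨⟨i, k⟩, rfl⟩ : ∃ σ, Mp.E.symm σ = j := ⟨Mp.E j, Equiv.symm_apply_apply _ _⟩
    rw [hΦ_apply, Mq.label, Mp.label, hlab]
  refine ⟨Φ, Subtype.ext (Prod.ext ?_ ?_)⟩
  · show Φ * sp * Φ⁻¹ = sq
    ext j
    have h1 : (Φ * sp * Φ⁻¹) j = Φ (sp (Φ⁻¹ j)) := rfl
    rw [h1, key1, Equiv.Perm.inv_def, Equiv.apply_symm_apply]
  · show Φ • xp = xq
    funext j
    rw [arrow_smul_apply, Equiv.Perm.smul_def]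
    have := key2 (Φ⁻¹ j)
    rw [Equiv.Perm.inv_def, Equiv.apply_symm_apply] at this
    exact this.symm

/-- the model pair attached to cycle data. -/
def modelPair (ι : Type) [Fintype ι] (len : ι → ℕ) (lab : ι → X)
    (E : Fin n ≃ Σ i : ι, ZMod (len i)) : Pairs n X :=
  ⟨(Equiv.permCongr E.symm (Equiv.sigmaCongrRight fun i => Equiv.addRight (1 : ZMod (len i))),
    fun j => lab (E j).1), by
      set s := Equiv.permCongr E.symm
        (Equiv.sigmaCongrRight fun i => Equiv.addRight (1 : ZMod (len i))) with hs
      have key : ∀ j : Fin n, lab (E (s j)).1 = lab (E j).1 := fun j => by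
        simp [hs, Equiv.permCongr_apply]
      funext j
      rw [arrow_smul_apply, Equiv.Perm.smul_def]
      conv_rhs => rw [← Equiv.apply_symm_apply s j]
      exact (key _).symm⟩

def modelPair_model (ι : Type) [Fintype ι] (len : ι → ℕ) (lab : ι → X)
    (E : Fin n ≃ Σ i : ι, ZMod (len i)) (hpos : ∀ i, 0 < len i) :
    Model (modelPair ι len lab E).1.1 (modelPair ι len lab E).1.2 where
  ι := ι
  fint := inferInstance
  len := len
  lab := lab
  E := E
  pos := hpos
  step i k := by
    show E.symm ⟨i, k + 1⟩ =
      (Equiv.permCongr E.symm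
        (Equiv.sigmaCongrRight fun i => Equiv.addRight (1 : ZMod (len i)))) (E.symm ⟨i, k⟩)
    simp [Equiv.permCongr_apply]
  label i k := by
    show lab (E (E.symm ⟨i, k⟩)).1 = lab i
    simp

def sigmaEqFiber {B : Type*} (g : B → Type*) (b₀ : B) :
    {z : Σ b, g b // z.1 = b₀} ≃ g b₀ where
  toFun z := z.2 ▸ z.1.2
  invFun k := ⟨⟨b₀, k⟩, rfl⟩
  left_inv := by rintro ⟨⟨b, k⟩, h⟩; dsimp only at h; subst h; rfl
  right_inv k := rfl

lemma fiberCount_smul (p : Pairs n X) (g : Equiv.Perm (Fin n)) :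
    fiberCount ((g • p).1.1) ((g • p).1.2) = fiberCount p.1.1 p.1.2 := by
  set M := mkModel p.1.1 p.1.2 (pair_hx p) with hM
  show fiberCount (g * p.1.1 * g⁻¹) (fun j => p.1.2 (g⁻¹ j)) = fiberCount p.1.1 p.1.2
  ext q
  rw [fiberCount_eq (M.conj g) q, fiberCount_eq M q]
  rfl

theorem card_orbits (N : ℕ) (hnN : n ≤ N) :
    Nat.card (orbitRel.Quotient (Equiv.Perm (Fin n)) (Pairs n X)) =
      #((finsuppAntidiag ((Icc 1 N) ×ˢ (univ : Finset X)) n).filter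
        fun l => ∀ q ∈ (Icc 1 N) ×ˢ (univ : Finset X), q.1 ∣ l q) := by
  classical
  set s := (Icc 1 N) ×ˢ (univ : Finset X) with hs
  set T := (finsuppAntidiag s n).filter (fun l => ∀ q ∈ s, q.1 ∣ l q) with hT
  have hper_mem : ∀ (p : Pairs n X) (i : Fin n), (per p.1.1 i, p.1.2 i) ∈ s := by
    intro p i
    set M := mkModel p.1.1 p.1.2 (pair_hx p) with hM
    rw [hs, mem_product, mem_Icc]
    refine ⟨⟨?_, ?_⟩, mem_univ _⟩
    · rw [M.per_apply i]; exact M.pos _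
    · rw [M.per_apply i]; exact le_trans (M.len_le _) hnN
  have hmem : ∀ p : Pairs n X, fiberCount p.1.1 p.1.2 ∈ T := by
    intro p
    rw [hT, mem_filter, mem_finsuppAntidiag]
    refine ⟨⟨?_, ?_⟩, ?_⟩
    · have h1 := Finset.card_eq_sum_card_fiberwise
        (f := fun i : Fin n => (per p.1.1 i, p.1.2 i))
        (s := univ) (t := s) (fun i _ => hper_mem p i)
      rw [card_univ, Fintype.card_fin] at h1
      calc s.sum ⇑(fiberCount p.1.1 p.1.2)
          = ∑ q ∈ s, #(univ.filter fun i => (per p.1.1 i, p.1.2 i) = q) :=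
            Finset.sum_congr rfl fun q _ => (fiberCount_apply p.1.1 p.1.2 q)
        _ = n := h1.symm
    · intro q hq
      rw [Finsupp.mem_support_iff, fiberCount_apply] at hq
      obtain ⟨i, hi⟩ := Finset.card_pos.mp (Nat.pos_of_ne_zero hq)
      rw [mem_filter] at hi
      rw [← hi.2]
      exact hper_mem p i
    · intro q hq
      rw [fiberCount_eq (mkModel p.1.1 p.1.2 (pair_hx p)) q]
      exact Dvd.intro _ rfl
  set G : Pairs n X → {l // l ∈ T} := fun p => ⟨fiberCount p.1.1 p.1.2, hmem p⟩ with hG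
  have hresp : ∀ (p p' : Pairs n X),
      (MulAction.orbitRel (Equiv.Perm (Fin n)) (Pairs n X)) p p' → G p = G p' := by
    intro p p' hpp'
    obtain ⟨g, hg⟩ := MulAction.mem_orbit_iff.mp
      ((MulAction.orbitRel_apply).mp hpp')
    apply Subtype.ext
    show fiberCount p.1.1 p.1.2 = fiberCount p'.1.1 p'.1.2
    rw [← hg]
    exact fiberCount_smul p' g
  set Gbar : orbitRel.Quotient (Equiv.Perm (Fin n)) (Pairs n X) → {l // l ∈ T} :=
    Quotient.lift G hresp with hGbar
  have hinj : Function.Injective Gbar := by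
    intro A B hAB
    obtain ⟨p, rfl⟩ := Quotient.exists_rep A
    obtain ⟨p', rfl⟩ := Quotient.exists_rep B
    have h : fiberCount p.1.1 p.1.2 = fiberCount p'.1.1 p'.1.2 :=
      congrArg Subtype.val hAB
    obtain ⟨g, hg⟩ := same_orbit_of_fiberCount_eq p p' h
    refine Quotient.sound ((MulAction.orbitRel_apply).mpr ?_)
    exact MulAction.mem_orbit_iff.mpr ⟨g⁻¹, by rw [inv_smul_eq_iff]; exact hg.symm⟩
  have hsurj : Function.Surjective Gbar := by
    rintro ⟨l, hl⟩
    have hl' := hl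
    rw [hT, mem_filter, mem_finsuppAntidiag] at hl'
    obtain ⟨⟨hsum, hsupp⟩, hdvd⟩ := hl'
    set ι := Σ q : {q : ℕ × X // q ∈ s}, Fin (l q.1 / q.1.1) with hι
    set len : ι → ℕ := fun z => z.1.1.1 with hlen
    set lab : ι → X := fun z => z.1.1.2 with hlab
    have hpos : ∀ z : ι, 0 < len z := by
      rintro ⟨⟨⟨r, y⟩, hq⟩, j⟩
      rw [hs, mem_product, mem_Icc] at hq
      exact hq.1.1
    haveI : ∀ z : ι, NeZero (len z) := fun z => ⟨(hpos z).ne'⟩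
    have hcard : Fintype.card (Σ z : ι, ZMod (len z)) = Fintype.card (Fin n) := by
      rw [Fintype.card_fin, Fintype.card_sigma]
      calc ∑ z : ι, Fintype.card (ZMod (len z)) = ∑ z : ι, len z := by
            exact Finset.sum_congr rfl fun z _ => ZMod.card _
        _ = ∑ q : {q : ℕ × X // q ∈ s}, ∑ j : Fin (l q.1 / q.1.1), len ⟨q, j⟩ := by
            rw [← Finset.univ_sigma_univ, Finset.sum_sigma]
        _ = ∑ q : {q : ℕ × X // q ∈ s}, (l q.1 / q.1.1) * q.1.1 := by
            refine Finset.sum_congr rfl fun q _ => ?_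
            show ∑ _j : Fin (l q.1 / q.1.1), q.1.1 = _
            rw [Finset.sum_const, card_univ, Fintype.card_fin, smul_eq_mul]
        _ = ∑ q : {q : ℕ × X // q ∈ s}, l q.1 := by
            refine Finset.sum_congr rfl fun q _ => Nat.div_mul_cancel (hdvd q.1 q.2)
        _ = ∑ q ∈ s, l q := Finset.sum_coe_sort s (fun q => l q)
        _ = n := hsum
    set E := (Fintype.equivOfCardEq hcard).symm with hE
    set p := modelPair ι len lab E with hp
    set M := modelPair_model ι len lab E hpos with hMdef
    refine ⟨Quotient.mk _ p, ?_⟩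
    apply Subtype.ext
    show fiberCount p.1.1 p.1.2 = l
    ext q
    rw [fiberCount_eq M q]
    by_cases hq : q ∈ s
    · have e0 : {z : ι // (len z, lab z) = q} ≃ Fin (l q / q.1) := by
        refine Equiv.trans (Equiv.subtypeEquivRight (fun z => ?_)) (sigmaEqFiber _ (⟨q, hq⟩ : {q : ℕ × X // q ∈ s}))
        show (len z, lab z) = q ↔ z.1 = ⟨q, hq⟩
        rw [hlen, hlab]
        constructor
        · intro hz
          apply Subtype.ext
          show z.1.1 = q
          rw [← hz]
        · intro hz
          show (z.1.1.1, z.1.1.2) = q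
          rw [hz]
      have e1 : {z : M.ι // (M.len z, M.lab z) = q} ≃ Fin (l q / q.1) := e0
      rw [Nat.card_congr e1, Nat.card_eq_fintype_card, Fintype.card_fin]
      exact Nat.mul_div_cancel' (hdvd q hq)
    · have h0 : l q = 0 := Finsupp.notMem_support_iff.mp (fun hmem2 => hq (hsupp hmem2))
      have hE0 : IsEmpty {z : ι // (len z, lab z) = q} := by
        refine ⟨?_⟩
        rintro ⟨z, hz⟩
        apply hq
        have h1 : (len z, lab z) = q := hz
        rw [← h1, hlen, hlab]
        exact z.1.2
      haveI hE2 : IsEmpty {z : M.ι // (M.len z, M.lab z) = q} := hE0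
      rw [Nat.card_of_isEmpty, h0, mul_zero]
  rw [Nat.card_congr (Equiv.ofBijective Gbar ⟨hinj, hsurj⟩), Nat.card_eq_fintype_card,
    Fintype.card_coe]

/-- indicator series of multiples of `r`. -/
noncomputable def indic (r : ℕ) : PowerSeries ℤ := PowerSeries.mk fun k => if r ∣ k then 1 else 0

lemma indic_mul (r : ℕ) (hr : 0 < r) :
    ((1 : PowerSeries ℤ) - PowerSeries.X ^ r) * indic r = 1 := by
  ext d
  rw [sub_mul, one_mul, map_sub, PowerSeries.coeff_one]
  rcases le_or_gt r d with h | h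
  · obtain ⟨e, rfl⟩ : ∃ e, d = e + r := ⟨d - r, (Nat.sub_add_cancel h).symm⟩
    rw [PowerSeries.coeff_X_pow_mul]
    simp only [indic, PowerSeries.coeff_mk]
    rw [if_neg (by omega : ¬ e + r = 0)]
    simp [Nat.dvd_add_self_right]
  · have h0 : (PowerSeries.coeff (R := ℤ) d) (PowerSeries.X ^ r * indic r) = 0 := by
      rw [PowerSeries.coeff_mul]
      refine Finset.sum_eq_zero ?_
      rintro ⟨i, j⟩ hij
      rw [Finset.HasAntidiagonal.mem_antidiagonal] at hij
      rw [PowerSeries.coeff_X_pow, if_neg (by omega : ¬ i = r), zero_mul]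
    rw [h0, sub_zero]
    by_cases hd : d = 0
    · subst hd
      simp [indic]
    · simp only [indic, PowerSeries.coeff_mk]
      rw [if_neg hd, if_neg (fun hdvd =>
        absurd (Nat.le_of_dvd (Nat.pos_of_ne_zero hd) hdvd) (not_le.mpr h))]

lemma coeff_prod_indic (N d : ℕ) (hdN : d ≤ N) :
    PowerSeries.coeff (R := ℤ) d (∏ r ∈ Icc 1 N, indic r ^ (Fintype.card X)) =
      (Nat.card (orbitRel.Quotient (Equiv.Perm (Fin d)) (Pairs d X)) : ℤ) := by
  classical
  have h1 : (∏ r ∈ Icc 1 N, indic r ^ (Fintype.card X)) =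
      ∏ q ∈ (Icc 1 N) ×ˢ (univ : Finset X), indic q.1 := by
    rw [Finset.prod_product]
    refine Finset.prod_congr rfl fun r _ => Eq.symm ?_
    show (∏ _y : X, indic r) = indic r ^ Fintype.card X
    rw [Finset.prod_const, card_univ]
  rw [h1, PowerSeries.coeff_prod]
  have h2 : ∀ l : (ℕ × X) →₀ ℕ, (∏ q ∈ (Icc 1 N) ×ˢ (univ : Finset X),
      PowerSeries.coeff (R := ℤ) (l q) (indic q.1)) =
      if (∀ q ∈ (Icc 1 N) ×ˢ (univ : Finset X), q.1 ∣ l q) then 1 else 0 := by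
    intro l
    rw [← Finset.prod_boole]
    exact Finset.prod_congr rfl fun q _ => by simp [indic, PowerSeries.coeff_mk]
  rw [Finset.sum_congr rfl (fun l _ => h2 l), Finset.sum_boole]
  rw [card_orbits (n := d) N hdN]

end PFP

/-- The number of `Sₙ`-orbits of pairs `(s, x)` with `s • x = x` has generating series
`∏_{r≥1} (1-t^r)^{-|X|}`. -/
theorem perm_fixedPairs_orbits_generating_series (X : Type) [Finite X] :
    ∀ N : ℕ, PowerSeries.coeff (R := ℤ) N
      ((PowerSeries.mk fun n =>
        (Nat.card (MulAction.orbitRel.Quotient (Equiv.Perm (Fin n))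
          {p : Equiv.Perm (Fin n) × (Fin n → X) // p.1 • p.2 = p.2}) : ℤ)) *
        ∏ r ∈ Finset.Icc 1 N,
          ((1 : PowerSeries ℤ) - PowerSeries.X ^ r) ^ Nat.card X) =
      (if N = 0 then 1 else 0) := by
  intro N
  classical
  letI : Fintype X := Fintype.ofFinite X
  have hc : Nat.card X = Fintype.card X := Nat.card_eq_fintype_card
  set A : PowerSeries ℤ := PowerSeries.mk fun n =>
    (Nat.card (MulAction.orbitRel.Quotient (Equiv.Perm (Fin n))
      {p : Equiv.Perm (Fin n) × (Fin n → X) // p.1 • p.2 = p.2}) : ℤ) with hA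
  set B : PowerSeries ℤ := ∏ r ∈ Finset.Icc 1 N, PFP.indic r ^ (Fintype.card X) with hB
  set C : PowerSeries ℤ := ∏ r ∈ Finset.Icc 1 N,
    ((1 : PowerSeries ℤ) - PowerSeries.X ^ r) ^ Nat.card X with hC
  have hBC : B * C = 1 := by
    rw [hB, hC, hc, ← Finset.prod_mul_distrib]
    have h1 : ∀ r ∈ Finset.Icc 1 N,
        PFP.indic r ^ Fintype.card X *
          ((1 : PowerSeries ℤ) - PowerSeries.X ^ r) ^ Fintype.card X = 1 := by
      intro r hr
      rw [Finset.mem_Icc] at hr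
      rw [← mul_pow, mul_comm, PFP.indic_mul r (by omega), one_pow]
    rw [Finset.prod_congr rfl h1, Finset.prod_const_one]
  have hsub : PowerSeries.coeff (R := ℤ) N ((A - B) * C) = 0 := by
    rw [PowerSeries.coeff_mul]
    refine Finset.sum_eq_zero ?_
    rintro ⟨i, j⟩ hij
    rw [Finset.HasAntidiagonal.mem_antidiagonal] at hij
    have hiN : i ≤ N := by omega
    have h3 : PowerSeries.coeff (R := ℤ) i (A - B) = 0 := by
      rw [map_sub, hA, PowerSeries.coeff_mk, hB, PFP.coeff_prod_indic N i hiN, sub_self]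
    rw [h3, zero_mul]
  calc PowerSeries.coeff (R := ℤ) N (A * C)
      = PowerSeries.coeff (R := ℤ) N (B * C + (A - B) * C) := by ring_nf
    _ = PowerSeries.coeff (R := ℤ) N (B * C) + PowerSeries.coeff (R := ℤ) N ((A - B) * C) := map_add _ _ _
    _ = (if N = 0 then 1 else 0) := by rw [hBC, hsub, add_zero, PowerSeries.coeff_one]
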